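/- If G₀ ≤ G has finite index and H₀ ≤ G₀ is closed in the profinite topology of G₀, then H₀ is closed in the profinite topology of G. -/

import Mathlib

open Pointwise

/-- The profinite topology on a group: generated by cosets of finite-index
normal subgroups. -/
def profiniteTopology (G : Type*) [Group G] : TopologicalSpace G :=
  TopologicalSpace.generateFrom
    {s : Set G | ∃ (N : Subgroup G) (g : G), N.Normal ∧ N.FiniteIndex ∧ s = g • (N : Set G)}

/-- In the profinite topology, every open set containing `x` contains a coset
`x • N` for some finite-index normal subgroup `N`. -/
lemma profinite_basic {G : Type*} [Group G] {U : Set G}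
    (hU : @IsOpen G (profiniteTopology G) U) {x : G} (hx : x ∈ U) :
    ∃ N : Subgroup G, N.Normal ∧ N.FiniteIndex ∧ x • (N : Set G) ⊆ U := by
  induction hU with
  | basic s hs =>
    obtain ⟨N, g, hN, hNf, rfl⟩ := hs
    refine ⟨N, hN, hNf, ?_⟩
    obtain ⟨n, hn, rfl⟩ := hx
    rintro _ ⟨m, hm, rfl⟩
    exact ⟨n * m, N.mul_mem hn hm, by simp [mul_assoc]⟩
  | univ => exact ⟨⊤, inferInstance, inferInstance, Set.subset_univ _⟩
  | inter s t _ _ ihs iht =>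
    obtain ⟨N₁, hN₁, hN₁f, h₁⟩ := ihs hx.1
    obtain ⟨N₂, hN₂, hN₂f, h₂⟩ := iht hx.2
    haveI := hN₁f; haveI := hN₂f; haveI := hN₁; haveI := hN₂
    refine ⟨N₁ ⊓ N₂, inferInstance, inferInstance, ?_⟩
    rintro _ ⟨m, hm, rfl⟩
    exact ⟨h₁ ⟨m, hm.1, rfl⟩, h₂ ⟨m, hm.2, rfl⟩⟩
  | sUnion S _ ih =>
    obtain ⟨s, hs, hxs⟩ := hx
    obtain ⟨N, hN, hNf, hsub⟩ := ih s hs hxs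
    exact ⟨N, hN, hNf, hsub.trans (Set.subset_sUnion_of_mem hs)⟩

theorem isClosed_of_isClosed_in_finiteIndex {G : Type*} [Group G]
    (G₀ : Subgroup G) (hG₀ : G₀.FiniteIndex) (H₀ : Subgroup G₀)
    (h : @IsClosed G₀ (profiniteTopology G₀) (H₀ : Set G₀)) :
    @IsClosed G (profiniteTopology G) (((↑) : G₀ → G) '' (H₀ : Set G₀)) := by
  haveI := hG₀
  rw [← @isOpen_compl_iff G _ (profiniteTopology G)]
  -- show the complement is open
  have key : ∀ x ∈ (((↑) : G₀ → G) '' (H₀ : Set G₀))ᶜ,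
      ∃ N : Subgroup G, N.Normal ∧ N.FiniteIndex ∧
        x • (N : Set G) ⊆ (((↑) : G₀ → G) '' (H₀ : Set G₀))ᶜ := by
    intro x hx
    by_cases hxG₀ : x ∈ G₀
    · -- x ∈ G₀ but x ∉ H₀
      have hxH₀ : (⟨x, hxG₀⟩ : G₀) ∉ (H₀ : Set G₀) := fun hmem => hx ⟨⟨x, hxG₀⟩, hmem, rfl⟩
      obtain ⟨N₀, hN₀, hN₀f, hsub⟩ := profinite_basic h.isOpen_compl hxH₀
      haveI := hN₀f
      set M : Subgroup G := N₀.map G₀.subtype with hM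
      have hMfi : M.FiniteIndex := by
        constructor
        have h1 : M ≤ G₀ := by
          rintro _ ⟨m, _, rfl⟩; exact m.2
        have := Subgroup.relIndex_mul_index h1
        have hrel : M.relIndex G₀ = N₀.index := by
          rw [Subgroup.relIndex, Subgroup.subgroupOf,
            Subgroup.comap_map_eq_self_of_injective G₀.subtype_injective]
        intro h0
        rw [← this, hrel] at h0
        rcases Nat.mul_eq_zero.mp h0 with h' | h'
        · exact hN₀f.index_ne_zero h'
        · exact hG₀.index_ne_zero h'
      haveI := hMfi
      refine ⟨M.normalCore, Subgroup.normalCore_normal M, inferInstance, ?_⟩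
      rintro _ ⟨n, hn, rfl⟩ ⟨m, hmH₀, hm⟩
      have hnM : n ∈ M := M.normalCore_le hn
      obtain ⟨n₀, hn₀, rfl⟩ := hnM
      have : (⟨x, hxG₀⟩ * n₀ : G₀) ∈ (H₀ : Set G₀)ᶜ := hsub ⟨n₀, hn₀, rfl⟩
      apply this
      have : m = (⟨x, hxG₀⟩ * n₀ : G₀) := by
        apply Subtype.ext; rw [hm]; rfl
      rwa [← this]
    · -- x ∉ G₀ : use the normal core of G₀
      refine ⟨G₀.normalCore, Subgroup.normalCore_normal G₀, inferInstance, ?_⟩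
      rintro _ ⟨n, hn, rfl⟩ ⟨m, _, hm⟩
      have hnG₀ : n ∈ G₀ := G₀.normalCore_le hn
      apply hxG₀
      have : x * n ∈ G₀ := by rw [show x * n = (m : G) from hm.symm]; exact m.2
      simpa using G₀.mul_mem this (G₀.inv_mem hnG₀)
  -- conclude openness
  have : (((↑) : G₀ → G) '' (H₀ : Set G₀))ᶜ =
      ⋃₀ {s | (∃ (N : Subgroup G) (g : G), N.Normal ∧ N.FiniteIndex ∧ s = g • (N : Set G)) ∧
        s ⊆ (((↑) : G₀ → G) '' (H₀ : Set G₀))ᶜ} := by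
    ext y
    constructor
    · intro hy
      obtain ⟨N, hN, hNf, hsub⟩ := key y hy
      exact ⟨y • (N : Set G), ⟨⟨N, y, hN, hNf, rfl⟩, hsub⟩, ⟨1, N.one_mem, by simp⟩⟩
    · rintro ⟨s, ⟨_, hsub⟩, hys⟩
      exact hsub hys
  rw [this]
  exact TopologicalSpace.GenerateOpen.sUnion _
    fun s hs => TopologicalSpace.GenerateOpen.basic s hs.1
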